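/- With E = ⊕_i (L_i ⊕ L_i^⊥) ⊕ G^{β_k}, the map Φ* sending tuples (A_1,...,A_k) with A_i : L_i → Σ_{j=i+1}^{k+1} L_j^⊥ (where L_{k+1}^⊥ := G^{β_k}) to L := Σ_{i=1}^k Γ_{A_i} satisfies: L ∩ G^{β_i} = Σ_{j=i+1}^k Γ_{A_j} for i ≤ k-1, and L ∩ G^{β_k} = {0}, where G^{β_i} := Σ_{j=i+1}^k (L_j + L_j^⊥) + G^{β_k}. In particular dim(L ∩ G^{β_i}) = k - i for all i. -/

import Mathlib

section Aux
variable {E : Type*} [AddCommGroup E] [Module ℂ E] {ι : Type*} [DecidableEq ι]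
  {M : ι → Submodule ℂ E}

/-- The projection onto the `a`-th component of an internal direct sum. -/
noncomputable def auxProj (hInt : DirectSum.IsInternal M) (a : ι) : E →ₗ[ℂ] E :=
  (M a).subtype ∘ₗ (DirectSum.component ℂ ι (fun i => (M i : Type _)) a) ∘ₗ
    (LinearEquiv.ofBijective (DirectSum.coeLinearMap M) hInt).symm.toLinearMap

variable (hInt : DirectSum.IsInternal M)

theorem auxProj_mem (a : ι) (x : E) : auxProj hInt a x ∈ M a := by
  simp [auxProj]

theorem auxProj_of_mem {a : ι} {x : E} (hx : x ∈ M a) : auxProj hInt a x = x := by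
  simp [auxProj, ← DirectSum.apply_eq_component,
    hInt.ofBijective_coeLinearMap_of_mem hx]

theorem auxProj_of_mem_ne {a b : ι} (hab : b ≠ a) {x : E} (hx : x ∈ M b) :
    auxProj hInt a x = 0 := by
  simp [auxProj, ← DirectSum.apply_eq_component,
    hInt.ofBijective_coeLinearMap_of_mem_ne hab hx]

theorem auxProj_eq_zero_of_mem_iSup {p : ι → Prop} {a : ι} (ha : ¬ p a) {x : E}
    (hx : x ∈ ⨆ b, ⨆ _ : p b, M b) : auxProj hInt a x = 0 := by
  refine Submodule.iSup_induction (motive := fun y => auxProj hInt a y = 0)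
    (fun b => ⨆ _ : p b, M b) hx (fun b y hy => ?_) (by simp) (fun y z hy hz => by
      simp [map_add, hy, hz])
  change y ∈ ⨆ _ : p b, M b at hy
  by_cases hb : p b
  · rw [iSup_pos hb] at hy
    exact auxProj_of_mem_ne hInt (fun h : b = a => ha (h ▸ hb)) hy
  · rw [iSup_neg hb] at hy
    rw [Submodule.mem_bot] at hy
    simp [hy]

end Aux

theorem stmt_9 (k : ℕ) (E : Type*) [AddCommGroup E] [Module ℂ E] [FiniteDimensional ℂ E]
    (L : Fin k → Submodule ℂ E) (Lp : Fin (k + 1) → Submodule ℂ E)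
    (hInt : DirectSum.IsInternal (Sum.elim L Lp))
    (hL1 : ∀ i, Module.finrank ℂ (L i) = 1)
    (A : Fin k → (E →ₗ[ℂ] E))
    (hA : ∀ i : Fin k, ∀ v ∈ L i, A i v ∈
      (⨆ p : Fin (k + 1), ⨆ _ : (i : ℕ) < (p : ℕ), Lp p)) :
    ∀ i : ℕ, i ≤ k →
      ((⨆ j : Fin k, Submodule.map (LinearMap.id + A j) (L j)) ⊓
          ((⨆ j : Fin k, ⨆ _ : i ≤ (j : ℕ), (L j ⊔ Lp j.castSucc)) ⊔ Lp (Fin.last k))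
        = ⨆ j : Fin k, ⨆ _ : i ≤ (j : ℕ),
            Submodule.map (LinearMap.id + A j) (L j)) ∧
      Module.finrank ℂ
        (((⨆ j : Fin k, Submodule.map (LinearMap.id + A j) (L j)) ⊓
          ((⨆ j : Fin k, ⨆ _ : i ≤ (j : ℕ), (L j ⊔ Lp j.castSucc)) ⊔ Lp (Fin.last k))
            : Submodule ℂ E)) = k - i := by
  classical
  set Γ : Fin k → Submodule ℂ E := fun j => Submodule.map (LinearMap.id + A j) (L j)
    with hΓdef
  set π : Fin k → E →ₗ[ℂ] E := fun j => auxProj hInt (Sum.inl j) with hπdef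
  -- basic projection facts
  have hπ_mem : ∀ (j : Fin k) (x : E), π j x ∈ L j := fun j x =>
    auxProj_mem hInt (Sum.inl j) x
  have hπ_self : ∀ (j : Fin k), ∀ v ∈ L j, π j v = v := fun j v hv =>
    auxProj_of_mem hInt (M := Sum.elim L Lp) (a := Sum.inl j) hv
  have hπ_ne : ∀ (j l : Fin k), j ≠ l → ∀ v ∈ L j, π l v = 0 := fun j l hjl v hv =>
    auxProj_of_mem_ne hInt (M := Sum.elim L Lp) (a := Sum.inl l) (b := Sum.inl j)
      (by simpa using hjl) hv
  have hπA : ∀ (j l : Fin k), ∀ v ∈ L j, π l (A j v) = 0 := by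
    intro j l v hv
    refine auxProj_eq_zero_of_mem_iSup hInt
      (p := fun a => ∃ q : Fin (k+1), a = Sum.inr q) (by simp) ?_
    have hle : (⨆ p : Fin (k + 1), ⨆ _ : (j : ℕ) < (p : ℕ), Lp p) ≤
        ⨆ b : Fin k ⊕ Fin (k+1), ⨆ _ : (∃ q : Fin (k+1), b = Sum.inr q),
          Sum.elim L Lp b := by
      refine iSup₂_le fun q _ => ?_
      exact le_iSup₂ (f := fun b _ => Sum.elim L Lp b) (Sum.inr q) ⟨q, rfl⟩
    exact hle (hA j v hv)
  have hGπ : ∀ (i : ℕ) (l : Fin k), (l : ℕ) < i → ∀ x ∈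
      ((⨆ j : Fin k, ⨆ _ : i ≤ (j : ℕ), (L j ⊔ Lp j.castSucc)) ⊔ Lp (Fin.last k)),
      π l x = 0 := by
    intro i l hl x hx
    refine auxProj_eq_zero_of_mem_iSup hInt
      (p := fun a => Sum.elim (fun j : Fin k => i ≤ (j : ℕ)) (fun _ => True) a)
      (by simpa using Nat.not_le.mpr hl) ?_
    have hle : ((⨆ j : Fin k, ⨆ _ : i ≤ (j : ℕ), (L j ⊔ Lp j.castSucc)) ⊔ Lp (Fin.last k)) ≤
        ⨆ b : Fin k ⊕ Fin (k+1),
          ⨆ _ : Sum.elim (fun j : Fin k => i ≤ (j : ℕ)) (fun _ => True) b,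
            Sum.elim L Lp b := by
      refine sup_le (iSup₂_le fun j hj => sup_le ?_ ?_) ?_
      · exact le_iSup₂ (f := fun b _ => Sum.elim L Lp b) (Sum.inl j) hj
      · exact le_iSup₂ (f := fun b _ => Sum.elim L Lp b) (Sum.inr j.castSucc) trivial
      · exact le_iSup₂ (f := fun b _ => Sum.elim L Lp b) (Sum.inr (Fin.last k)) trivial
    exact hle hx
  -- the reconstruction operator
  set T : E →ₗ[ℂ] E := ∑ j : Fin k, ((LinearMap.id + A j) ∘ₗ π j) with hTdef
  have hT : ∀ x ∈ (⨆ j : Fin k, Γ j), T x = x := by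
    intro x hx
    refine Submodule.iSup_induction (motive := fun y => T y = y) Γ hx (fun j y hy => ?_)
      (map_zero T) (fun y z hy hz => ?_)
    · change y ∈ Γ j at hy
      obtain ⟨v, hv, rfl⟩ := hy
      have hval : ((LinearMap.id + A j) : E →ₗ[ℂ] E) v = v + A j v := rfl
      show T (((LinearMap.id + A j) : E →ₗ[ℂ] E) v) = _
      rw [hval]
      have hπw : ∀ l : Fin k, π l (v + A j v) = if l = j then v else 0 := by
        intro l
        rw [map_add, hπA j l v hv, add_zero]
        by_cases h : l = j
        · subst h; simp [hπ_self l v hv]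
        · simp [h, hπ_ne j l (Ne.symm h) v hv]
      calc T (v + A j v)
          = ∑ l : Fin k, ((LinearMap.id + A l) : E →ₗ[ℂ] E) (π l (v + A j v)) := by
            rw [hTdef]; simp [LinearMap.sum_apply]
        _ = v + A j v := by
            rw [Finset.sum_eq_single j]
            · rw [hπw j]; simp
            · intro l _ hl
              rw [hπw l]; simp [hl]
            · intro h; exact absurd (Finset.mem_univ j) h
    · show T (y + z) = y + z
      rw [map_add, hy, hz]
  -- inclusions of the right-hand side
  have hS_le_LL : ∀ i : ℕ, (⨆ j : Fin k, ⨆ _ : i ≤ (j:ℕ), Γ j) ≤ ⨆ j : Fin k, Γ j :=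
    fun i => iSup₂_le fun j _ => le_iSup Γ j
  have hΓ_le_G : ∀ (i : ℕ) (j : Fin k), i ≤ (j:ℕ) → Γ j ≤
      ((⨆ j : Fin k, ⨆ _ : i ≤ (j : ℕ), (L j ⊔ Lp j.castSucc)) ⊔ Lp (Fin.last k)) := by
    intro i j hij x hx
    obtain ⟨v, hv, rfl⟩ := hx
    have hval : ((LinearMap.id + A j) : E →ₗ[ℂ] E) v = v + A j v := rfl
    rw [hval]
    refine add_mem ?_ ?_
    · have h1 : L j ≤
          ((⨆ j : Fin k, ⨆ _ : i ≤ (j : ℕ), (L j ⊔ Lp j.castSucc)) ⊔ Lp (Fin.last k)) :=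
        le_trans (le_trans le_sup_left
          (le_iSup₂ (f := fun (j : Fin k) (_ : i ≤ (j:ℕ)) => L j ⊔ Lp j.castSucc) j hij))
          le_sup_left
      exact h1 hv
    · have h2 : (⨆ p : Fin (k+1), ⨆ _ : (j:ℕ) < (p:ℕ), Lp p) ≤
          ((⨆ j : Fin k, ⨆ _ : i ≤ (j : ℕ), (L j ⊔ Lp j.castSucc)) ⊔ Lp (Fin.last k)) := by
        refine iSup₂_le fun p hp => ?_
        by_cases hpl : p = Fin.last k
        · subst hpl; exact le_sup_right
        · have hcs : (p.castPred hpl).castSucc = p := Fin.castSucc_castPred p hpl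
          have hip : i ≤ ((p.castPred hpl : Fin k) : ℕ) := by
            have hco : ((p.castPred hpl : Fin k) : ℕ) = (p:ℕ) := Fin.coe_castPred p hpl
            omega
          calc Lp p = Lp (p.castPred hpl).castSucc := by rw [hcs]
            _ ≤ L (p.castPred hpl) ⊔ Lp (p.castPred hpl).castSucc := le_sup_right
            _ ≤ _ := le_trans
                (le_iSup₂ (f := fun (j : Fin k) (_ : i ≤ (j:ℕ)) => L j ⊔ Lp j.castSucc)
                  _ hip) le_sup_left
      exact h2 (hA j v hv)
  have hS_le_G : ∀ i : ℕ, (⨆ j : Fin k, ⨆ _ : i ≤ (j:ℕ), Γ j) ≤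
      ((⨆ j : Fin k, ⨆ _ : i ≤ (j : ℕ), (L j ⊔ Lp j.castSucc)) ⊔ Lp (Fin.last k)) :=
    fun i => iSup₂_le fun j hj => hΓ_le_G i j hj
  -- the intersection identity
  have hEq : ∀ i : ℕ, (⨆ j : Fin k, Γ j) ⊓
      ((⨆ j : Fin k, ⨆ _ : i ≤ (j : ℕ), (L j ⊔ Lp j.castSucc)) ⊔ Lp (Fin.last k))
      = ⨆ j : Fin k, ⨆ _ : i ≤ (j:ℕ), Γ j := by
    intro i
    refine le_antisymm ?_ (le_inf (hS_le_LL i) (hS_le_G i))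
    intro x hx
    rw [Submodule.mem_inf] at hx
    obtain ⟨hx1, hx2⟩ := hx
    have hx' : x = ∑ l : Fin k, ((LinearMap.id + A l) : E →ₗ[ℂ] E) (π l x) := by
      conv_lhs => rw [← hT x hx1]
      rw [hTdef]; simp [LinearMap.sum_apply]
    rw [hx']
    refine Submodule.sum_mem _ fun l _ => ?_
    by_cases hil : i ≤ (l:ℕ)
    · exact le_iSup₂ (f := fun (j : Fin k) (_ : i ≤ (j:ℕ)) => Γ j) l hil
        (Submodule.mem_map_of_mem (hπ_mem l x))
    · rw [hGπ i l (by omega) x hx2]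
      simp
  -- dimension counting
  have hΓ1 : ∀ j : Fin k, Module.finrank ℂ (Γ j) = 1 := by
    intro j
    have hinj : Function.Injective
        (((LinearMap.id + A j) : E →ₗ[ℂ] E).domRestrict (L j)) := by
      rw [← LinearMap.ker_eq_bot]
      refine LinearMap.ker_eq_bot'.mpr fun m hm => ?_
      have hm' : (m : E) + A j (m : E) = 0 := by
        simpa [LinearMap.domRestrict_apply, LinearMap.add_apply] using hm
      have hv0 : (m : E) = 0 := by
        have h0 := congrArg (π j) hm'
        rw [map_add, hπ_self j _ m.2, hπA j j _ m.2, add_zero, map_zero] at h0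
        exact h0
      exact Subtype.ext hv0
    have hrange : Γ j = LinearMap.range
        (((LinearMap.id + A j) : E →ₗ[ℂ] E).domRestrict (L j)) :=
      (LinearMap.range_domRestrict _ _).symm
    rw [hrange, LinearMap.finrank_range_of_inj hinj, hL1 j]
  have hdisj : ∀ (i : ℕ) (hik : i < k),
      Γ ⟨i, hik⟩ ⊓ (⨆ j : Fin k, ⨆ _ : i+1 ≤ (j:ℕ), Γ j) = ⊥ := by
    intro i hik
    rw [eq_bot_iff]
    intro x hx
    rw [Submodule.mem_inf] at hx
    obtain ⟨hx1, hx2⟩ := hx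
    have hxG : x ∈ ((⨆ j : Fin k, ⨆ _ : i+1 ≤ (j : ℕ), (L j ⊔ Lp j.castSucc)) ⊔
        Lp (Fin.last k)) := hS_le_G (i+1) hx2
    have h0 : π ⟨i, hik⟩ x = 0 := hGπ (i+1) ⟨i, hik⟩ (by simp) x hxG
    obtain ⟨v, hv, rfl⟩ := hx1
    have hval : ((LinearMap.id + A ⟨i, hik⟩) : E →ₗ[ℂ] E) v = v + A ⟨i, hik⟩ v := rfl
    rw [hval] at h0 ⊢
    rw [map_add, hπ_self _ v hv, hπA _ _ v hv, add_zero] at h0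
    rw [Submodule.mem_bot, h0]
    simp
  have hstep : ∀ (i : ℕ) (hik : i < k),
      (⨆ j : Fin k, ⨆ _ : i ≤ (j:ℕ), Γ j)
        = Γ ⟨i, hik⟩ ⊔ ⨆ j : Fin k, ⨆ _ : i+1 ≤ (j:ℕ), Γ j := by
    intro i hik
    refine le_antisymm (iSup₂_le fun j hj => ?_) (sup_le ?_ (iSup₂_le fun j hj => ?_))
    · rcases eq_or_lt_of_le hj with h | h
      · have hje : j = ⟨i, hik⟩ := Fin.ext h.symm
        rw [hje]; exact le_sup_left
      · exact le_trans (le_iSup₂ (f := fun (j : Fin k) (_ : i+1 ≤ (j:ℕ)) => Γ j) j h)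
          le_sup_right
    · exact le_iSup₂ (f := fun (j : Fin k) (_ : i ≤ (j:ℕ)) => Γ j) ⟨i, hik⟩ (le_refl i)
    · exact le_iSup₂ (f := fun (j : Fin k) (_ : i ≤ (j:ℕ)) => Γ j) j (by omega)
  have hSk : (⨆ j : Fin k, ⨆ _ : k ≤ (j:ℕ), Γ j) = ⊥ := by
    rw [eq_bot_iff]
    exact iSup₂_le fun j hj => absurd hj (Nat.not_le.mpr j.isLt)
  have key : ∀ (d i : ℕ), i + d = k →
      Module.finrank ℂ ((⨆ j : Fin k, ⨆ _ : i ≤ (j:ℕ), Γ j : Submodule ℂ E)) = d := by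
    intro d
    induction d with
    | zero =>
      intro i h
      have hik : i = k := by omega
      subst hik
      rw [hSk]
      exact finrank_bot ℂ E
    | succ d ih =>
      intro i h
      have hik : i < k := by omega
      have h2 := Submodule.finrank_sup_add_finrank_inf_eq (Γ ⟨i, hik⟩)
        (⨆ j : Fin k, ⨆ _ : i+1 ≤ (j:ℕ), Γ j)
      rw [hdisj i hik, hΓ1 ⟨i, hik⟩, ih (i+1) (by omega), finrank_bot] at h2
      rw [hstep i hik]
      omega
  intro i hi
  refine ⟨hEq i, ?_⟩
  rw [hEq i]
  exact key (k - i) i (by omega)
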